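/- Let k be a field, d ≥ 2, and for 1 ≤ j ≤ n define the multilinear forms D_j : (k^{n r̄})^d → k by D_j(x_1,...,x_d) = Σ_{m=(j-1)r̄+1}^{j r̄} Π_{i=1}^d x_i(m). Then every nontrivial k-linear combination Σ_j a_j D_j has partition rank at least r̄; that is, prk_k(D_1,...,D_n) = r̄. -/

import Mathlib

open scoped BigOperators

/-- A multilinear form has partition rank one if it factors as a product of two
multilinear forms on complementary nonempty subsets of the coordinates. -/
def IsPartRankOne {k : Type*} [Field k] {d : ℕ} {V : Fin d → Type*}
    [∀ i, AddCommGroup (V i)] [∀ i, Module k (V i)]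
    (P : MultilinearMap k V k) : Prop :=
  ∃ I : Set (Fin d), I.Nonempty ∧ Iᶜ.Nonempty ∧
    ∃ (R : MultilinearMap k (fun i : I => V i.1) k)
      (S : MultilinearMap k (fun j : ↥Iᶜ => V j.1) k),
      ∀ x : (∀ i, V i), P x = R (fun i => x i.1) * S (fun j => x j.1)

/-- `P` is a sum of `r` partition-rank-one multilinear forms. -/
def HasPrkDecomp {k : Type*} [Field k] {d : ℕ} {V : Fin d → Type*}
    [∀ i, AddCommGroup (V i)] [∀ i, Module k (V i)]
    (P : MultilinearMap k V k) (r : ℕ) : Prop :=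
  ∃ Q : Fin r → MultilinearMap k V k, (∀ i, IsPartRankOne (Q i)) ∧ P = ∑ i, Q i

/-- The diagonal multilinear forms `D_j(x_1,...,x_d) = Σ_{m} Π_i x_i(j, m)`, where the
`n·r̄` coordinates are indexed by pairs `(j, m) : Fin n × Fin r̄` (the block of `D_j`
consisting of the coordinates with first component `j`). -/
noncomputable def diagForm (k : Type*) [Field k] (d n rb : ℕ) (j : Fin n) :
    MultilinearMap k (fun _ : Fin d => (Fin n × Fin rb) → k) k :=
  ∑ m : Fin rb,
    (MultilinearMap.mkPiRing k (Fin d) (1 : k)).compLinearMap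
      (fun _ => LinearMap.proj (j, m))

lemma normalize_term {k ι : Type*} [Field k] {m : ℕ} (z : Fin m) (A : Set (Fin m))
    (hA : A.Nonempty) (hAc : Aᶜ.Nonempty)
    (f : (↥A → ι) → k) (g : (↥Aᶜ → ι) → k) :
    ∃ (B : Set (Fin m)) (u : (↥Bᶜ → ι) → k) (v : (↥B → ι) → k),
      B.Nonempty ∧ z ∉ B ∧
      ∀ x : Fin m → ι,
        f (fun i => x i.1) * g (fun i => x i.1) = u (fun i => x i.1) * v (fun i => x i.1) := by
  by_cases hz : z ∈ A
  · exact ⟨Aᶜ, fun w => f (fun i : ↥A => w ⟨i.1, by simp [i.2]⟩), g, hAc, by simp [hz],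
      fun x => rfl⟩
  · exact ⟨A, fun w => g (fun i : ↥Aᶜ => w i), f, hA, hz, fun x => mul_comm _ _⟩

lemma sum_diag_eval {k : Type*} [Field k] {ι : Type*} [Fintype ι] [DecidableEq ι] {m : ℕ}
    (c : ι → k) (x : Fin (m + 1) → ι) :
    ∑ p : ι, c p * (if ∀ i, x i = p then 1 else 0)
      = if ∀ i, x i = x 0 then c (x 0) else 0 := by
  by_cases hall : ∀ i, x i = x 0
  · have hiff : ∀ p, (∀ i, x i = p) ↔ p = x 0 := by
      intro p
      constructor
      · intro h; exact (h 0).symm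
      · rintro rfl; exact hall
    rw [if_pos hall]
    simp_rw [hiff]
    simp only [mul_ite, mul_one, mul_zero]
    rw [Finset.sum_ite_eq' Finset.univ (x 0) c]
    simp
  · rw [if_neg hall]
    apply Finset.sum_eq_zero
    intro p _
    have hnp : ¬ ∀ i, x i = p := fun h => hall fun i => (h i).trans (h 0).symm
    rw [if_neg hnp, mul_zero]

open scoped Classical in
/-- Any subspace of functions on a finite type contains an element whose support
has cardinality at least the dimension of the subspace. -/
lemma exists_large_support {k : Type*} [Field k] {α : Type*} [Fintype α]
    (W : Submodule k (α → k)) :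
    ∃ h ∈ W, Module.finrank k W ≤ (Finset.univ.filter fun a => h a ≠ 0).card := by
  classical
  set P : ℕ → Prop := fun n => ∃ h ∈ W, (Finset.univ.filter fun a => h a ≠ 0).card = n with hP
  have hP0 : P 0 := ⟨0, W.zero_mem, by simp⟩
  have hPM : P (Nat.findGreatest P (Fintype.card α)) :=
    Nat.findGreatest_spec (Nat.zero_le _) hP0
  obtain ⟨h, hhW, hcard⟩ := hPM
  refine ⟨h, hhW, ?_⟩
  -- restriction to the support of `h` is injective on `W`
  set s : Finset α := Finset.univ.filter fun a => h a ≠ 0 with hs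
  have hmax : ∀ h' ∈ W, (Finset.univ.filter fun a => h' a ≠ 0).card ≤ s.card := by
    intro h' hh'
    rw [hs, hcard]
    exact Nat.le_findGreatest (Finset.card_filter_le _ _ |>.trans (by simp)) ⟨h', hh', rfl⟩
  have hinj : Function.Injective
      (((LinearMap.funLeft k k (Subtype.val : ↥s → α)).comp W.subtype)) := by
    rw [← LinearMap.ker_eq_bot, LinearMap.ker_eq_bot']
    rintro ⟨h', hh'⟩ hres
    have hzero : ∀ a ∈ s, h' a = 0 := by
      intro a has
      have := congrFun hres (⟨a, has⟩ : ↥s)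
      simpa [LinearMap.funLeft] using this
    have h'eq : h' = 0 := by
      by_contra hne
      obtain ⟨a, ha⟩ : ∃ a, h' a ≠ 0 := by
        by_contra hall
        push_neg at hall
        exact hne (funext hall)
      have hdisj : ∀ a, h a ≠ 0 → h' a = 0 := fun a hha =>
        hzero a (by simp [hs, hha])
      have hsum : ∀ a, (h + h') a ≠ 0 ↔ (h a ≠ 0 ∨ h' a ≠ 0) := by
        intro a
        by_cases hha : h a = 0
        · simp [hha]
        · simp [hha, hdisj a hha]
      have hcard2 : (Finset.univ.filter fun a => (h + h') a ≠ 0).card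
          = s.card + (Finset.univ.filter fun a => h' a ≠ 0).card := by
        rw [hs]
        rw [← Finset.card_union_of_disjoint]
        · congr 1
          ext a
          simp only [Finset.mem_union, Finset.mem_filter, Finset.mem_univ, true_and]
          exact hsum a
        · rw [Finset.disjoint_filter]
          intro a _ hha
          simp [hdisj a hha]
      have hpos : 0 < (Finset.univ.filter fun a => h' a ≠ 0).card := by
        rw [Finset.card_pos]
        exact ⟨a, by simp [ha]⟩
      have := hmax (h + h') (W.add_mem hhW hh')
      omega
    exact Subtype.ext h'eq
  have := LinearMap.finrank_le_finrank_of_injective hinj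
  simpa [Module.finrank_fintype_fun_eq_card] using this

open scoped Classical in
lemma core_diag_bound {k : Type*} [Field k] (d : ℕ) :
    ∀ {ι : Type} [Fintype ι] [DecidableEq ι] {τ : Type} [Fintype τ] (c : ι → k)
      (A : τ → Set (Fin (d + 1)))
      (_ : ∀ t, (A t).Nonempty ∧ (A t)ᶜ.Nonempty)
      (f : ∀ t, (↥(A t) → ι) → k) (g : ∀ t, (↥(A t)ᶜ → ι) → k),
      (∀ x : Fin (d + 1) → ι,
        (if ∀ i, x i = x 0 then c (x 0) else 0)
          = ∑ t, f t (fun i => x i.1) * g t (fun i => x i.1)) →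
      (Finset.univ.filter fun a => c a ≠ 0).card ≤ Fintype.card τ := by
  induction d with
  | zero =>
    intro ι _ _ τ _ c A hA f g hF
    haveI hτ : IsEmpty τ := by
      constructor
      intro t
      obtain ⟨⟨i, hi⟩, ⟨i', hi'⟩⟩ := hA t
      exact hi' ((show i' = i from Fin.ext (by omega)) ▸ hi)
    have hc : ∀ a, c a = 0 := by
      intro a
      simpa using hF fun _ => a
    simp [hc]
  | succ d IH =>
    intro ι _ _ τ _ c A hA f g hF
    choose B u v hBne hB0 hfg using fun t =>
      normalize_term (0 : Fin (d + 2)) (A t) (hA t).1 (hA t).2 (f t) (g t)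
    have hF' : ∀ x : Fin (d + 2) → ι,
        (if ∀ i, x i = x 0 then c (x 0) else 0)
          = ∑ t, u t (fun i => x i.1) * v t (fun i => x i.1) := by
      intro x
      rw [hF x]
      exact Finset.sum_congr rfl fun t _ => hfg t x
    set N : Finset ι := Finset.univ.filter fun a => c a ≠ 0 with hN
    set S : Finset τ := Finset.univ.filter
      (fun t => ∀ i : Fin (d + 2), i ≠ 0 → i ∈ B t) with hS
    by_cases hNS : N.card ≤ S.card
    · exact hNS.trans ((Finset.card_filter_le _ _).trans (by simp))
    push_neg at hNS
    -- the linear map given by the "slice" terms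
    set L : (↥N → k) →ₗ[k] (↥S → k) :=
      { toFun := fun h => fun t => ∑ a : ↥N, h a * u t.1 (fun _ => a.1)
        map_add' := by
          intro h1 h2
          funext t
          simp [add_mul, Finset.sum_add_distrib]
        map_smul' := by
          intro r h1
          funext t
          simp [Finset.mul_sum, mul_assoc] } with hL
    have hkerdim : N.card - S.card ≤ Module.finrank k (LinearMap.ker L) := by
      have h1 := LinearMap.finrank_range_add_finrank_ker L
      have h2 : Module.finrank k ↥(LinearMap.range L) ≤ S.card := by
        have h3 := Submodule.finrank_le (LinearMap.range L)
        simpa [Module.finrank_fintype_fun_eq_card] using h3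
      have h3 : Module.finrank k (↥N → k) = N.card := by
        simp [Module.finrank_fintype_fun_eq_card]
      omega
    obtain ⟨h0, hh0mem, hh0card⟩ := exists_large_support (LinearMap.ker L)
    set ht : ι → k := fun a => if ha : a ∈ N then h0 ⟨a, ha⟩ else 0 with hht
    set c' : ι → k := fun a => ht a * c a with hc'
    -- the support of c' is large
    have hsupp : N.card - S.card ≤ (Finset.univ.filter fun a => c' a ≠ 0).card := by
      refine le_trans (le_trans hkerdim hh0card) ?_
      refine Finset.card_le_card_of_injOn (fun a => a.1) ?_ ?_
      · rintro ⟨a, haN⟩ hafil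
        simp only [Finset.mem_coe, Finset.mem_filter, Finset.mem_univ, true_and] at hafil ⊢
        have haN' : c a ≠ 0 := by
          simpa [hN] using haN
        simp only [hc', hht]
        rw [dif_pos haN]
        exact mul_ne_zero hafil haN'
      · intro a _ b _ hab
        exact Subtype.ext hab
    -- the slice constraints
    have hconstraint : ∀ t ∈ S, ∑ a : ι, ht a * u t (fun _ => a) = 0 := by
      intro t htS
      have this2 : ∑ a : ↥N, h0 a * u t (fun _ => a.1) = 0 := by
        simpa [hL] using congrFun (LinearMap.mem_ker.mp hh0mem) (⟨t, htS⟩ : ↥S)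
      calc ∑ a : ι, ht a * u t (fun _ => a)
          = ∑ a ∈ N, ht a * u t (fun _ => a) :=
            (Finset.sum_subset (Finset.subset_univ N)
              (fun a _ ha => by simp [hht, dif_neg ha])).symm
        _ = ∑ a : ↥N, ht a.1 * u t (fun _ => a.1) := by
            rw [Finset.univ_eq_attach, Finset.sum_attach N (fun a => ht a * u t fun _ => a)]
        _ = ∑ a : ↥N, h0 a * u t (fun _ => a.1) := by
            refine Finset.sum_congr rfl fun a _ => ?_
            simp [hht, dif_pos a.2]
        _ = 0 := this2
    -- data for the induction step
    have hout : ∀ t : τ, t ∉ S → ∃ i : Fin (d + 2), i ≠ 0 ∧ i ∉ B t := by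
      intro t htS
      simp only [hS, Finset.mem_filter, Finset.mem_univ, true_and] at htS
      push_neg at htS
      exact htS
    have hBne0 : ∀ t (i : ↥(B t)), i.1 ≠ 0 := fun t i h => hB0 t (h ▸ i.2)
    set B' : τ → Set (Fin (d + 1)) := fun t => {j | j.succ ∈ B t} with hB'
    have hmemB' : ∀ t (i : ↥(B t)), (i.1.pred (hBne0 t i)) ∈ B' t := by
      intro t i
      simp only [hB', Set.mem_setOf_eq, Fin.succ_pred]
      exact i.2
    have hmemB'c : ∀ t (i : ↥(B t)ᶜ) (hi0 : i.1 ≠ 0), (i.1.pred hi0) ∈ (B' t)ᶜ := by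
      intro t i hi0
      simp only [Set.mem_compl_iff, hB', Set.mem_setOf_eq, Fin.succ_pred]
      exact i.2
    set v' : ∀ t, (↥(B' t) → ι) → k := fun t y =>
      v t (fun i => y ⟨i.1.pred (hBne0 t i), hmemB' t i⟩) with hv'
    set u' : ∀ t, (↥(B' t)ᶜ → ι) → k := fun t z =>
      ∑ a : ι, ht a * u t (fun i =>
        if hi0 : i.1 = 0 then a else z ⟨i.1.pred hi0, hmemB'c t i hi0⟩) with hu'
    -- the key identity after contracting the first slot with ht
    have hkey : ∀ y : Fin (d + 1) → ι,
        (if ∀ j, y j = y 0 then c' (y 0) else 0)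
          = ∑ t ∈ Sᶜ, u' t (fun i => y i.1) * v' t (fun i => y i.1) := by
      intro y
      have hvind : ∀ (t : τ) (a : ι), (fun i : ↥(B t) => (Fin.cons a y : Fin (d + 2) → ι) i.1)
          = (fun i : ↥(B t) => y (i.1.pred (hBne0 t i))) := by
        intro t a
        funext i
        conv_lhs => rw [← Fin.succ_pred i.1 (hBne0 t i)]
        rw [Fin.cons_succ]
      have huval : ∀ (t : τ) (a : ι), (fun i : ↥(B t)ᶜ => (Fin.cons a y : Fin (d + 2) → ι) i.1)
          = (fun i : ↥(B t)ᶜ => if hi0 : i.1 = 0 then a else y (i.1.pred hi0)) := by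
        intro t a
        funext i
        by_cases hi0 : i.1 = 0
        · rw [dif_pos hi0, hi0, Fin.cons_zero]
        · rw [dif_neg hi0]
          conv_lhs => rw [← Fin.succ_pred i.1 hi0]
          rw [Fin.cons_succ]
      have hterm : ∀ t : τ,
          ∑ a : ι, ht a * (u t (fun i => (Fin.cons a y : Fin (d + 2) → ι) i.1) * v t (fun i => (Fin.cons a y : Fin (d + 2) → ι) i.1))
            = u' t (fun i => y i.1) * v' t (fun i => y i.1) := by
        intro t
        have step : ∀ a : ι, ht a * (u t (fun i => (Fin.cons a y : Fin (d + 2) → ι) i.1) * v t (fun i => (Fin.cons a y : Fin (d + 2) → ι) i.1))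
            = (ht a * u t (fun i : ↑(B t)ᶜ => if hi0 : i.1 = 0 then a else y (i.1.pred hi0)))
              * v t (fun i : ↑(B t) => y (i.1.pred (hBne0 t i))) := by
          intro a
          rw [hvind t a, huval t a, mul_assoc]
        rw [Finset.sum_congr rfl fun a _ => step a, ← Finset.sum_mul]
      have hLHS : ∑ a : ι, ht a *
            (if ∀ i, (Fin.cons a y : Fin (d + 2) → ι) i = (Fin.cons a y : Fin (d + 2) → ι) 0
              then c ((Fin.cons a y : Fin (d + 2) → ι) 0) else 0)
          = (if ∀ j, y j = y 0 then c' (y 0) else 0) := by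
        have hcond : ∀ a : ι,
            (∀ i, (Fin.cons a y : Fin (d + 2) → ι) i = (Fin.cons a y : Fin (d + 2) → ι) 0) ↔ (∀ j, y j = a) := by
          intro a
          rw [Fin.cons_zero]
          constructor
          · intro h j
            have := h j.succ
            rwa [Fin.cons_succ] at this
          · intro h i
            refine Fin.cases ?_ ?_ i
            · rw [Fin.cons_zero]
            · intro j
              rw [Fin.cons_succ]
              exact h j
        by_cases hall : ∀ j, y j = y 0
        · rw [if_pos hall]
          have hcond2 : ∀ a : ι, (∀ j, y j = a) ↔ a = y 0 := by
            intro a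
            constructor
            · intro h
              exact (h 0).symm
            · rintro rfl
              exact hall
          simp_rw [hcond, hcond2, Fin.cons_zero]
          simp only [mul_ite, mul_zero]
          rw [Finset.sum_ite_eq' Finset.univ (y 0) (fun a => ht a * c a)]
          simp [hc']
        · rw [if_neg hall]
          apply Finset.sum_eq_zero
          intro a _
          have hna : ¬ ∀ i, (Fin.cons a y : Fin (d + 2) → ι) i = (Fin.cons a y : Fin (d + 2) → ι) 0 := by
            rw [hcond]
            intro h
            exact hall fun j => (h j).trans (h 0).symm
          rw [if_neg hna, mul_zero]
      calc (if ∀ j, y j = y 0 then c' (y 0) else 0)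
          = ∑ a : ι, ht a *
              (if ∀ i, (Fin.cons a y : Fin (d + 2) → ι) i = (Fin.cons a y : Fin (d + 2) → ι) 0
                then c ((Fin.cons a y : Fin (d + 2) → ι) 0) else 0) := hLHS.symm
        _ = ∑ a : ι, ht a * ∑ t : τ,
              u t (fun i => (Fin.cons a y : Fin (d + 2) → ι) i.1) * v t (fun i => (Fin.cons a y : Fin (d + 2) → ι) i.1) :=
            Finset.sum_congr rfl fun a _ => by rw [hF' (Fin.cons a y)]
        _ = ∑ t : τ, ∑ a : ι,
              ht a * (u t (fun i => (Fin.cons a y : Fin (d + 2) → ι) i.1) * v t (fun i => (Fin.cons a y : Fin (d + 2) → ι) i.1)) := by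
            simp_rw [Finset.mul_sum]
            exact Finset.sum_comm
        _ = ∑ t : τ, u' t (fun i => y i.1) * v' t (fun i => y i.1) :=
            Finset.sum_congr rfl fun t _ => hterm t
        _ = ∑ t ∈ Sᶜ, u' t (fun i => y i.1) * v' t (fun i => y i.1) := by
            refine (Finset.sum_subset (Finset.subset_univ Sᶜ) ?_).symm
            intro t _ htSc
            have htS : t ∈ S := by simpa using htSc
            have hu0 : u' t (fun i => y i.1) = 0 := by
              simp only [hu']
              have harg : ∀ a : ι, (fun i : ↥(B t)ᶜ =>
                  if hi0 : i.1 = 0 then a else y (i.1.pred hi0)) = fun _ => a := by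
                intro a
                funext i
                have hi0 : i.1 = 0 := by
                  by_contra hne
                  simp only [hS, Finset.mem_filter, Finset.mem_univ, true_and] at htS
                  exact i.2 (htS i.1 hne)
                rw [dif_pos hi0]
              calc ∑ a : ι, ht a * u t (fun i : ↑(B t)ᶜ =>
                      if hi0 : i.1 = 0 then a else y (i.1.pred hi0))
                  = ∑ a : ι, ht a * u t (fun _ => a) :=
                    Finset.sum_congr rfl fun a _ => by rw [harg a]
                _ = 0 := hconstraint t htS
            rw [hu0, zero_mul]
    -- apply the inductive hypothesis
    have hA' : ∀ t : ↥(Sᶜ), (B' t.1).Nonempty ∧ (B' t.1)ᶜ.Nonempty := by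
      intro t
      obtain ⟨i₀, hi0ne, hi0notin⟩ := hout t.1 (Finset.mem_compl.mp t.2)
      constructor
      · obtain ⟨i, hi⟩ := hBne t.1
        have hine : i ≠ 0 := fun h => hB0 t.1 (h ▸ hi)
        exact ⟨i.pred hine, by
          simp only [hB', Set.mem_setOf_eq, Fin.succ_pred]
          exact hi⟩
      · exact ⟨i₀.pred hi0ne, by
          simp only [Set.mem_compl_iff, hB', Set.mem_setOf_eq, Fin.succ_pred]
          exact hi0notin⟩
    have hIH := IH (ι := ι) (τ := ↥(Sᶜ)) c' (fun t => B' t.1) hA'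
      (fun t => v' t.1) (fun t => u' t.1) ?_
    · have h1 : (Finset.univ.filter fun a => c' a ≠ 0).card
          ≤ Fintype.card ↑(Sᶜ : Finset τ) := hIH
      have h2 : Fintype.card ↑(Sᶜ : Finset τ) = Fintype.card τ - S.card := by
        rw [Fintype.card_coe, Finset.card_compl]
      have h3 : S.card ≤ Fintype.card τ := by
        simpa using Finset.card_le_univ S
      omega
    · intro y
      rw [hkey y, ← Finset.sum_coe_sort (Sᶜ)
        (fun t => u' t (fun i => y i.1) * v' t (fun i => y i.1))]
      exact Finset.sum_congr rfl fun t _ => mul_comm _ _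

lemma diag_eval {k : Type*} [Field k] {d' n rb : ℕ} (a : Fin n → k)
    (x : Fin (d' + 1) → Fin n × Fin rb) :
    (∑ j, a j • diagForm k (d' + 1) n rb j) (fun i => Pi.single (x i) (1 : k))
      = if ∀ i, x i = x 0 then a (x 0).1 else 0 := by
  have hsingle : ∀ p : Fin n × Fin rb,
      (∏ i, (Pi.single (x i) (1 : k) : Fin n × Fin rb → k) p) = if ∀ i, x i = p then 1 else 0 := by
    intro p
    calc ∏ i, (Pi.single (x i) (1 : k) : Fin n × Fin rb → k) p
        = ∏ i, if x i = p then (1 : k) else 0 := by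
          refine Finset.prod_congr rfl fun i _ => ?_
          by_cases h : x i = p
          · rw [if_pos h, ← h, Pi.single_eq_same]
          · rw [if_neg h, Pi.single_eq_of_ne (Ne.symm h)]
      _ = if ∀ i, x i = p then 1 else 0 := by
          rw [Finset.prod_boole]
          simp
  calc (∑ j, a j • diagForm k (d' + 1) n rb j) (fun i => Pi.single (x i) (1 : k))
      = ∑ p : Fin n × Fin rb, a p.1 *
          ∏ i, (Pi.single (x i) (1 : k) : Fin n × Fin rb → k) p := by
        simp [diagForm, MultilinearMap.sum_apply, MultilinearMap.smul_apply,
          MultilinearMap.compLinearMap_apply, MultilinearMap.mkPiRing_apply,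
          Fintype.sum_prod_type, Finset.mul_sum, smul_eq_mul]
    _ = ∑ p : Fin n × Fin rb, a p.1 * (if ∀ i, x i = p then 1 else 0) := by
        simp_rw [hsingle]
    _ = if ∀ i, x i = x 0 then a (x 0).1 else 0 := sum_diag_eval (fun p => a p.1) x

lemma prod_set_compl {M : Type*} [CommMonoid M] {α : Type*} [Fintype α] (I : Set α)
    [Fintype ↑I] [Fintype ↑(Iᶜ)] (f : α → M) :
    (∏ i : ↑I, f i.1) * ∏ i : ↑(Iᶜ), f i.1 = ∏ i, f i := by
  classical
  convert Fintype.prod_subtype_mul_prod_subtype (fun a => a ∈ I) f using 4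
  rfl

/-- every nontrivial linear combination of the `D_j` has partition rank at
least `r̄`, and the collective partition rank of `(D_1,...,D_n)` equals `r̄`. -/
theorem diagonal_forms_partition_rank (k : Type*) [Field k] (d n rb : ℕ)
    (hd : 2 ≤ d) (hn : 0 < n) :
    (∀ a : Fin n → k, a ≠ 0 →
        ∀ m : ℕ, HasPrkDecomp (∑ j, a j • diagForm k d n rb j) m → rb ≤ m) ∧
    (∃ a : Fin n → k, a ≠ 0 ∧ HasPrkDecomp (∑ j, a j • diagForm k d n rb j) rb) := by
  classical
  obtain ⟨d', rfl⟩ : ∃ d', d = d' + 1 := ⟨d - 1, by omega⟩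
  constructor
  · intro a ha m hdecomp
    obtain ⟨Q, hQ1, hQsum⟩ := hdecomp
    choose I hIne hIcne R S hRS using hQ1
    have hcore := core_diag_bound (k := k) d' (ι := Fin n × Fin rb) (τ := Fin m)
      (fun p => a p.1) I (fun t => ⟨hIne t, hIcne t⟩)
      (fun t z => R t fun i => Pi.single (z i) (1 : k))
      (fun t z => S t fun i => Pi.single (z i) (1 : k)) ?_
    · obtain ⟨j0, hj0⟩ : ∃ j0, a j0 ≠ 0 := by
        by_contra hall
        push_neg at hall
        exact ha (funext hall)
      have hinj : rb ≤ (Finset.univ.filter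
          fun p : Fin n × Fin rb => (fun p : Fin n × Fin rb => a p.1) p ≠ 0).card := by
        have := Finset.card_le_card_of_injOn
          (s := (Finset.univ : Finset (Fin rb)))
          (t := Finset.univ.filter
            fun p : Fin n × Fin rb => (fun p : Fin n × Fin rb => a p.1) p ≠ 0)
          (fun mm : Fin rb => ((j0, mm) : Fin n × Fin rb))
          (fun mm _ => by simp [hj0]) (fun x _ y _ h => (Prod.ext_iff.mp h).2)
        simpa using this
      simpa using hinj.trans hcore
    · intro x
      calc (if ∀ i, x i = x 0 then (fun p : Fin n × Fin rb => a p.1) (x 0) else 0)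
          = (∑ j, a j • diagForm k (d' + 1) n rb j) (fun i => Pi.single (x i) (1 : k)) :=
            (diag_eval a x).symm
        _ = ∑ t : Fin m, Q t (fun i => Pi.single (x i) (1 : k)) := by
            rw [hQsum]
            exact sum_apply _ _ _
        _ = ∑ t : Fin m,
              (fun z : ↥(I t) → Fin n × Fin rb => R t fun i => Pi.single (z i) (1 : k))
                (fun i => x i.1)
              * (fun z : ↥(I t)ᶜ → Fin n × Fin rb => S t fun i => Pi.single (z i) (1 : k))
                (fun i => x i.1) :=
            Finset.sum_congr rfl fun t _ => hRS t _
  · refine ⟨Pi.single ⟨0, hn⟩ 1, ?_, ?_⟩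
    · intro h
      have := congrFun h ⟨0, hn⟩
      rw [Pi.single_eq_same] at this
      exact one_ne_zero this
    · have hsum : ∑ j, (Pi.single (⟨0, hn⟩ : Fin n) (1 : k) : Fin n → k) j
            • diagForm k (d' + 1) n rb j
          = diagForm k (d' + 1) n rb ⟨0, hn⟩ := by
        rw [Finset.sum_eq_single (⟨0, hn⟩ : Fin n)]
        · rw [Pi.single_eq_same, one_smul]
        · intro j _ hj
          rw [Pi.single_eq_of_ne hj, zero_smul]
        · simp
      rw [hsum]
      refine ⟨fun mm => (MultilinearMap.mkPiRing k (Fin (d' + 1)) (1 : k)).compLinearMap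
        (fun _ => LinearMap.proj (⟨0, hn⟩, mm)), ?_, ?_⟩
      case refine_2 => rfl
      intro mm
      refine ⟨{(0 : Fin (d' + 1))}, ⟨0, rfl⟩, ⟨⟨1, by omega⟩, ?_⟩, ?_⟩
      · simp only [Set.mem_compl_iff, Set.mem_singleton_iff]
        intro h
        exact absurd (congrArg Fin.val h) (by norm_num)
      · refine ⟨(MultilinearMap.mkPiRing k
            ↥({(0 : Fin (d' + 1))} : Set (Fin (d' + 1))) (1 : k)).compLinearMap
            (fun _ => LinearMap.proj (⟨0, hn⟩, mm)),
          (MultilinearMap.mkPiRing k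
            ↥(({(0 : Fin (d' + 1))} : Set (Fin (d' + 1)))ᶜ) (1 : k)).compLinearMap
            (fun _ => LinearMap.proj (⟨0, hn⟩, mm)), ?_⟩
        intro x
        simp only [MultilinearMap.compLinearMap_apply, MultilinearMap.mkPiRing_apply,
          LinearMap.proj_apply, smul_eq_mul, mul_one]
        exact (prod_set_compl ({0} : Set (Fin (d' + 1))) (fun i => x i (⟨0, hn⟩, mm))).symm
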